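/- If the fractional perfect b-matching polytope P(G,b) contains a strictly positive element (x_e > 0 for all edges e), then its dimension equals |E| − |V| + B, where B is the number of bipartite connected components of G. -/

import Mathlib

open Finset
open scoped Classical

variable {V E : Type}

/-- Adjacency in a multigraph given by its endpoint function. -/
def Adj (ends : E → Sym2 V) (u w : V) : Prop := ∃ e, ends e = s(u, w)

/-- Reachability (walks of any length). -/
def Reach (ends : E → Sym2 V) : V → V → Prop := Relation.ReflTransGen (Adj ends)

/-- The connected component of a vertex, as a vertex set. -/
def component (ends : E → Sym2 V) (v : V) : Set V := {w | Reach ends v w}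

/-- Reachability using only edges in `D`. -/
def ReachOn (ends : E → Sym2 V) (D : Set E) (u w : V) : Prop :=
  Relation.ReflTransGen (fun a b => ∃ e ∈ D, ends e = s(a, b)) u w

/-- Component of `v` in the spanning subgraph with edge set `D`. -/
def componentOn (ends : E → Sym2 V) (D : Set E) (v : V) : Set V := {w | ReachOn ends D v w}

/-- A vertex set is bipartite if it admits a proper 2-colouring of all edges
incident to it (equivalently, no odd cycle inside it). -/
def BipartiteOn (ends : E → Sym2 V) (S : Set V) : Prop :=
  ∃ f : V → Bool, ∀ (e : E) (u w : V), ends e = s(u, w) → u ∈ S → f u ≠ f w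

/-- The number of bipartite connected components. -/
noncomputable def numBipComp [Fintype V] (ends : E → Sym2 V) : ℕ :=
  Set.ncard {S : Set V | (∃ v, S = component ends v) ∧ BipartiteOn ends S}

/-- The real incidence matrix: entry `(v, e)` is `1` iff `v` is an endpoint of `e`
(a loop contributes a single `1`). -/
noncomputable def incMatrix (ends : E → Sym2 V) : Matrix V E ℝ :=
  fun v e => if v ∈ ends e then (1 : ℝ) else 0

/-- Degree of `v` in the edge set `F`, with loops counted twice. -/
noncomputable def degIn (ends : E → Sym2 V) (F : Finset E) (v : V) : ℕ :=
  ∑ e ∈ F, (if ends e = s(v, v) then 2 else if v ∈ ends e then 1 else 0)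

/-- An edge set is a cycle iff it is nonempty, every vertex has degree 0 or 2 in it,
and its support is connected via its edges.  This includes loops (length-1 cycles)
and pairs of parallel edges (length-2 cycles). -/
def IsCycle (ends : E → Sym2 V) (F : Finset E) : Prop :=
  F.Nonempty ∧ (∀ v : V, degIn ends F v = 0 ∨ degIn ends F v = 2) ∧
    ∀ u w : V, (∃ e ∈ F, u ∈ ends e) → (∃ e ∈ F, w ∈ ends e) → ReachOn ends (↑F) u w

/-- The cycles whose edges lie in `D` and whose vertices lie in `S`. -/
def CyclesIn (ends : E → Sym2 V) (D : Set E) (S : Set V) : Set (Finset E) :=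
  {F | IsCycle ends F ∧ (∀ e ∈ F, e ∈ D) ∧ ∀ e ∈ F, ∀ v : V, v ∈ ends e → v ∈ S}

/-- The part of the graph with edges in `D` and vertices in `S` is acyclic, or
contains exactly one cycle with that cycle having odd length. -/
def AcyclicOrOneOdd (ends : E → Sym2 V) (D : Set E) (S : Set V) : Prop :=
  CyclesIn ends D S = ∅ ∨ ∃ F : Finset E, CyclesIn ends D S = {F} ∧ Odd F.card

/-- The nullity of a real matrix. -/
noncomputable def nullity {α β : Type} [Fintype β] (A : Matrix α β ℝ) : ℕ :=
  Module.finrank ℝ (LinearMap.ker (Matrix.mulVecLin A))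

/-- The fractional perfect `b`-matching polytope of the multigraph. -/
def PGb [Fintype E] (ends : E → Sym2 V) (b : V → ℝ) : Set (E → ℝ) :=
  {x | (∀ e, 0 ≤ x e) ∧ ∀ v : V, ∑ e : E, (if v ∈ ends e then x e else 0) = b v}

lemma adj_symm (ends : E → Sym2 V) : Symmetric (Adj ends) := by
  rintro u w ⟨e, he⟩; exact ⟨e, by rw [he, Sym2.eq_swap]⟩

lemma reach_symm (ends : E → Sym2 V) : Symmetric (Reach ends) :=
  fun a b h => by
    haveI : Std.Symm (Adj ends) := ⟨adj_symm ends⟩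
    exact Std.Symm.symm (r := Relation.ReflTransGen (Adj ends)) a b h

lemma mem_component_self (ends : E → Sym2 V) (v : V) : v ∈ component ends v :=
  Relation.ReflTransGen.refl

lemma component_eq_of_reach {ends : E → Sym2 V} {v w : V} (h : Reach ends v w) :
    component ends v = component ends w := by
  ext x
  constructor
  · intro hx; exact Relation.ReflTransGen.trans (reach_symm ends h) hx
  · intro hx; exact Relation.ReflTransGen.trans h hx

def Kker (ends : E → Sym2 V) : Submodule ℝ (V → ℝ) where
  carrier := {z | ∀ (e : E) (u w : V), ends e = s(u, w) → z u + z w = 0}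
  add_mem' := by
    intro a b ha hb e u w he
    have h1 := ha e u w he
    have h2 := hb e u w he
    simp only [Pi.add_apply]
    linarith
  zero_mem' := by intro e u w he; simp
  smul_mem' := by
    intro c a ha e u w he
    simp only [Pi.smul_apply, smul_eq_mul]
    rw [← mul_add, ha e u w he, mul_zero]

lemma mem_Kker {ends : E → Sym2 V} {z : V → ℝ} :
    z ∈ Kker ends ↔ ∀ (e : E) (u w : V), ends e = s(u, w) → z u + z w = 0 := Iff.rfl

lemma sum_ite_mem_sym2 [Fintype V] (z : V → ℝ) (u w : V) :
    ∑ v : V, (if v ∈ s(u, w) then z v else 0)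
      = if u = w then z u else z u + z w := by
  have h1 : ∀ v : V, (if v ∈ s(u, w) then z v else 0)
      = (if v ∈ ({u, w} : Finset V) then z v else 0) := by
    intro v
    refine if_congr ?_ rfl rfl
    simp [Sym2.mem_iff]
  rw [Finset.sum_congr rfl (fun v _ => h1 v), Finset.sum_ite_mem, Finset.univ_inter]
  by_cases h : u = w
  · subst h; simp
  · rw [if_neg h, Finset.sum_pair h]

lemma mulVec_apply [Fintype E] (ends : E → Sym2 V) (x : E → ℝ) (v : V) :
    (incMatrix ends).mulVec x v = ∑ e : E, (if v ∈ ends e then x e else 0) := by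
  simp [Matrix.mulVec, dotProduct, incMatrix, ite_mul, one_mul, zero_mul]

lemma transpose_mulVec_apply [Fintype V] (ends : E → Sym2 V) (z : V → ℝ) (e : E) :
    (incMatrix ends).transpose.mulVec z e = ∑ v : V, (if v ∈ ends e then z v else 0) := by
  simp [Matrix.mulVec, dotProduct, incMatrix, Matrix.transpose_apply, ite_mul, one_mul, zero_mul]

lemma ker_transpose_eq [Fintype V] (ends : E → Sym2 V) :
    LinearMap.ker (incMatrix ends).transpose.mulVecLin = Kker ends := by
  ext z
  simp only [LinearMap.mem_ker, Matrix.mulVecLin_apply, mem_Kker]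
  constructor
  · intro h e u w he
    have h2 := congrFun h e
    rw [transpose_mulVec_apply, he, sum_ite_mem_sym2, Pi.zero_apply] at h2
    by_cases huw : u = w
    · subst huw; rw [if_pos rfl] at h2; rw [h2]; ring
    · rwa [if_neg huw] at h2
  · intro h
    funext e
    obtain ⟨u, w, he⟩ : ∃ u w, ends e = s(u, w) :=
      Sym2.inductionOn (ends e) fun u w => ⟨u, w, rfl⟩
    rw [transpose_mulVec_apply, he, sum_ite_mem_sym2, Pi.zero_apply]
    have h2 := h e u w he
    by_cases huw : u = w
    · subst huw; rw [if_pos rfl]; linarith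
    · rwa [if_neg huw]

def BipSet (ends : E → Sym2 V) : Set (Set V) :=
  {S : Set V | (∃ v, S = component ends v) ∧ BipartiteOn ends S}

noncomputable def bbase (ends : E → Sym2 V) (S : BipSet ends) : V :=
  S.2.1.choose

lemma component_bbase (ends : E → Sym2 V) (S : BipSet ends) :
    (S : Set V) = component ends (bbase ends S) := S.2.1.choose_spec

noncomputable def col (ends : E → Sym2 V) (S : BipSet ends) : V → Bool :=
  S.2.2.choose

lemma col_spec (ends : E → Sym2 V) (S : BipSet ends) :
    ∀ (e : E) (u w : V), ends e = s(u, w) → u ∈ (S : Set V) →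
      col ends S u ≠ col ends S w := S.2.2.choose_spec

noncomputable def sgn2 (ends : E → Sym2 V) (S : Set V) (v : V) : ℝ :=
  if h : S ∈ BipSet ends then
    (if col ends ⟨S, h⟩ v = col ends ⟨S, h⟩ (bbase ends ⟨S, h⟩) then 1 else -1)
  else 0

noncomputable def cext (ends : E → Sym2 V) (c : BipSet ends → ℝ) (S : Set V) : ℝ :=
  if h : S ∈ BipSet ends then c ⟨S, h⟩ else 0

noncomputable def psi (ends : E → Sym2 V) (c : BipSet ends → ℝ) (v : V) : ℝ :=
  sgn2 ends (component ends v) v * cext ends c (component ends v)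

lemma ne_zero_of_reach {ends : E → Sym2 V} {z : V → ℝ} (hz : z ∈ Kker ends)
    {v w : V} (h : Reach ends v w) (hv : z v ≠ 0) : z w ≠ 0 := by
  induction h with
  | refl => exact hv
  | @tail a b _ hab ih =>
    obtain ⟨e, he⟩ := hab
    have h2 := hz e a b he
    intro h0
    rw [h0, add_zero] at h2
    exact ih h2

lemma zero_of_not_bip {ends : E → Sym2 V} {z : V → ℝ} (hz : z ∈ Kker ends)
    {v : V} (h : component ends v ∉ BipSet ends) : z v = 0 := by
  by_contra hv
  apply h
  refine ⟨⟨v, rfl⟩, ⟨fun w => decide (0 < z w), ?_⟩⟩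
  intro e u w he hu
  have hzu : z u ≠ 0 := ne_zero_of_reach hz hu hv
  have hsum := hz e u w he
  rw [Ne, decide_eq_decide]
  rcases hzu.lt_or_gt with h1 | h1
  · have h2 : 0 < z w := by linarith
    exact fun hiff => absurd (hiff.mpr h2) (not_lt.mpr h1.le)
  · have h2 : z w < 0 := by linarith
    exact fun hiff => absurd (hiff.mp h1) (not_lt.mpr h2.le)

lemma val_on_bip {ends : E → Sym2 V} {z : V → ℝ} (hz : z ∈ Kker ends)
    (S : BipSet ends) {w : V} (h : Reach ends (bbase ends S) w) :
    z w = if col ends S w = col ends S (bbase ends S) then z (bbase ends S)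
      else - z (bbase ends S) := by
  induction h with
  | refl => simp
  | @tail a b hpa hab ih =>
    obtain ⟨e, he⟩ := hab
    have hmem : a ∈ (S : Set V) := by rw [component_bbase ends S]; exact hpa
    have hcol : col ends S a ≠ col ends S b := col_spec ends S e a b he hmem
    have hsum := hz e a b he
    have hzb : z b = - z a := by linarith
    by_cases h1 : col ends S a = col ends S (bbase ends S)
    · rw [if_pos h1] at ih
      have h2 : ¬ (col ends S b = col ends S (bbase ends S)) :=
        fun hh => hcol (h1.trans hh.symm)
      rw [if_neg h2, hzb, ih]
    · rw [if_neg h1] at ih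
      have h2 : col ends S b = col ends S (bbase ends S) := by
        revert hcol h1
        cases col ends S a <;> cases col ends S b <;>
          cases col ends S (bbase ends S) <;> simp
      rw [if_pos h2, hzb, ih, neg_neg]

lemma psi_mem (ends : E → Sym2 V) (c : BipSet ends → ℝ) : psi ends c ∈ Kker ends := by
  intro e u w he
  have hcomp : component ends u = component ends w :=
    component_eq_of_reach (Relation.ReflTransGen.single ⟨e, he⟩)
  show psi ends c u + psi ends c w = 0
  unfold psi
  rw [← hcomp]
  by_cases h : component ends u ∈ BipSet ends
  · have hu : u ∈ ((⟨component ends u, h⟩ : BipSet ends) : Set V) :=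
      mem_component_self ends u
    have hcol := col_spec ends ⟨component ends u, h⟩ e u w he hu
    simp only [sgn2, dif_pos h]
    by_cases h1 : col ends ⟨component ends u, h⟩ u
        = col ends ⟨component ends u, h⟩ (bbase ends ⟨component ends u, h⟩)
    · have h2 : ¬ (col ends ⟨component ends u, h⟩ w
          = col ends ⟨component ends u, h⟩ (bbase ends ⟨component ends u, h⟩)) :=
        fun hh => hcol (h1.trans hh.symm)
      rw [if_pos h1, if_neg h2]; ring
    · have h2 : col ends ⟨component ends u, h⟩ w
          = col ends ⟨component ends u, h⟩ (bbase ends ⟨component ends u, h⟩) := by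
        revert hcol h1
        cases col ends ⟨component ends u, h⟩ u <;>
          cases col ends ⟨component ends u, h⟩ w <;>
          cases col ends ⟨component ends u, h⟩ (bbase ends ⟨component ends u, h⟩) <;> simp
      rw [if_neg h1, if_pos h2]; ring
  · simp only [sgn2, dif_neg h]; ring

lemma psi_eval (ends : E → Sym2 V) {z : V → ℝ} (hz : z ∈ Kker ends) :
    psi ends (fun S => z (bbase ends S)) = z := by
  funext v
  unfold psi
  by_cases h : component ends v ∈ BipSet ends
  · have hreach : Reach ends (bbase ends ⟨component ends v, h⟩) v := by
      have hv : v ∈ component ends (bbase ends ⟨component ends v, h⟩) := by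
        rw [← component_bbase ends ⟨component ends v, h⟩]
        exact mem_component_self ends v
      exact hv
    have hval := val_on_bip hz ⟨component ends v, h⟩ hreach
    unfold sgn2 cext
    rw [dif_pos h, dif_pos h, hval]
    by_cases h1 : col ends ⟨component ends v, h⟩ v
        = col ends ⟨component ends v, h⟩ (bbase ends ⟨component ends v, h⟩)
    · rw [if_pos h1, if_pos h1, one_mul]
    · rw [if_neg h1, if_neg h1]; ring
  · unfold sgn2
    rw [dif_neg h, zero_mul]
    exact (zero_of_not_bip hz h).symm

lemma psi_bbase (ends : E → Sym2 V) (c : BipSet ends → ℝ) (S : BipSet ends) :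
    psi ends c (bbase ends S) = c S := by
  unfold psi
  rw [← component_bbase ends S]
  unfold sgn2 cext
  rw [dif_pos S.2, dif_pos S.2, if_pos rfl, one_mul]

noncomputable def kerEquiv (ends : E → Sym2 V) : Kker ends ≃ₗ[ℝ] (BipSet ends → ℝ) where
  toFun z := fun S => (z : V → ℝ) (bbase ends S)
  map_add' z₁ z₂ := rfl
  map_smul' c z := rfl
  invFun c := ⟨psi ends c, psi_mem ends c⟩
  left_inv z := Subtype.ext (psi_eval ends z.2)
  right_inv c := funext fun S => psi_bbase ends c S

lemma finrank_Kker [Fintype V] (ends : E → Sym2 V) :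
    Module.finrank ℝ (Kker ends) = numBipComp ends := by
  haveI : Finite (BipSet ends) := (Set.toFinite _).to_subtype
  haveI : Fintype (BipSet ends) := Fintype.ofFinite _
  rw [(kerEquiv ends).finrank_eq, Module.finrank_fintype_fun_eq_card]
  show Fintype.card (BipSet ends) = Set.ncard (BipSet ends)
  rw [← Nat.card_coe_set_eq, Nat.card_eq_fintype_card]

lemma mulVecLin_eq_b [Fintype E] (ends : E → Sym2 V) {b : V → ℝ} {x : E → ℝ}
    (hx : x ∈ PGb ends b) : (incMatrix ends).mulVecLin x = b := by
  funext v
  rw [Matrix.mulVecLin_apply, mulVec_apply]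
  exact hx.2 v

lemma vectorSpan_eq_ker [Fintype V] [Fintype E] (ends : E → Sym2 V) (b : V → ℝ)
    (hpos : ∃ x ∈ PGb ends b, ∀ e : E, 0 < x e) :
    vectorSpan ℝ (PGb ends b) = LinearMap.ker (incMatrix ends).mulVecLin := by
  obtain ⟨x, hx, hxpos⟩ := hpos
  apply le_antisymm
  · rw [vectorSpan_def, Submodule.span_le]
    rintro d hd
    rw [Set.mem_vsub] at hd
    obtain ⟨y1, hy1, y2, hy2, rfl⟩ := hd
    simp only [SetLike.mem_coe, LinearMap.mem_ker]
    have e1 := mulVecLin_eq_b ends hy1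
    have e2 := mulVecLin_eq_b ends hy2
    show (incMatrix ends).mulVecLin (y1 - y2) = 0
    rw [map_sub, e1, e2, sub_self]
  · intro y hy
    by_cases hE : IsEmpty E
    · have hy0 : y = 0 := funext fun e => (hE.elim e)
      rw [hy0]; exact Submodule.zero_mem _
    rw [not_isEmpty_iff] at hE
    haveI := hE
    set ε : ℝ := Finset.univ.inf' Finset.univ_nonempty (fun e => x e / (|y e| + 1)) with hε
    have hεpos : 0 < ε := by
      rw [hε, Finset.lt_inf'_iff]
      intro e _
      exact div_pos (hxpos e) (by positivity)
    have hεle : ∀ e, ε * (|y e| + 1) ≤ x e := by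
      intro e
      have h1 : ε ≤ x e / (|y e| + 1) := Finset.inf'_le _ (Finset.mem_univ e)
      have h2 : (0:ℝ) < |y e| + 1 := by positivity
      calc ε * (|y e| + 1) ≤ (x e / (|y e| + 1)) * (|y e| + 1) :=
            mul_le_mul_of_nonneg_right h1 h2.le
        _ = x e := div_mul_cancel₀ _ h2.ne'
    have hker : ∀ v : V, ∑ e : E, (if v ∈ ends e then y e else 0) = 0 := by
      intro v
      have h1 := congrFun (LinearMap.mem_ker.mp hy) v
      rwa [Matrix.mulVecLin_apply, mulVec_apply, Pi.zero_apply] at h1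
    have hmem : x + ε • y ∈ PGb ends b := by
      constructor
      · intro e
        have h1 : ε * |y e| ≤ x e := by nlinarith [hεle e]
        have h2 : -(ε * |y e|) ≤ ε * y e := by
          have h3 := neg_abs_le (y e)
          nlinarith
        simp only [Pi.add_apply, Pi.smul_apply, smul_eq_mul]
        linarith
      · intro v
        have hsplit : ∀ e : E, (if v ∈ ends e then (x + ε • y) e else 0)
            = (if v ∈ ends e then x e else 0) + ε * (if v ∈ ends e then y e else 0) := by
          intro e
          by_cases hve : v ∈ ends e <;> simp [hve]
        rw [Finset.sum_congr rfl fun e _ => hsplit e, Finset.sum_add_distrib,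
          ← Finset.mul_sum, hker v, mul_zero, add_zero]
        exact hx.2 v
    have hd : ε • y ∈ vectorSpan ℝ (PGb ends b) := by
      have h1 := vsub_mem_vectorSpan ℝ hmem hx
      have h2 : (x + ε • y) -ᵥ x = ε • y := by
        show (x + ε • y) - x = ε • y
        abel
      rwa [h2] at h1
    have h3 := Submodule.smul_mem (vectorSpan ℝ (PGb ends b)) ε⁻¹ hd
    rwa [smul_smul, inv_mul_cancel₀ hεpos.ne', one_smul] at h3

theorem dim_PGb_of_strictly_positive [Fintype V] [Fintype E] (ends : E → Sym2 V)
    (b : V → ℝ) (hb : ∀ v, 0 ≤ b v)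
    (hpos : ∃ x ∈ PGb ends b, ∀ e : E, 0 < x e) :
    (Module.finrank ℝ (affineSpan ℝ (PGb ends b)).direction : ℤ)
      = (Fintype.card E : ℤ) - (Fintype.card V : ℤ) + (numBipComp ends : ℤ) := by
  rw [direction_affineSpan, vectorSpan_eq_ker ends b hpos]
  have h1 := LinearMap.finrank_range_add_finrank_ker (incMatrix ends).mulVecLin
  have h2 := LinearMap.finrank_range_add_finrank_ker (incMatrix ends).transpose.mulVecLin
  have h3 : Module.finrank ℝ (LinearMap.range (incMatrix ends).transpose.mulVecLin)
      = Module.finrank ℝ (LinearMap.range (incMatrix ends).mulVecLin) :=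
    Matrix.rank_transpose (incMatrix ends)
  have h4 : Module.finrank ℝ (LinearMap.ker (incMatrix ends).transpose.mulVecLin)
      = numBipComp ends := by rw [ker_transpose_eq, finrank_Kker]
  rw [Module.finrank_fintype_fun_eq_card] at h1 h2
  omega
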